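/- Fix m ∈ ℕ, m ≥ 2, and let g_m : [0,1] → [0,1] be the multiple-tent map. Let a : ℕ → ℕ be a digit sequence with a(i) < m for all i, and set x = Σ_{i=0}^{∞} a(i)/m^{i+1} ∈ [0,1]. Then: if a(0) is even, g_m(x) = Σ_{i=0}^{∞} a(i+1)/m^{i+1}; and if a(0) is odd, g_m(x) = Σ_{i=0}^{∞} (m−1−a(i+1))/m^{i+1}. That is, in base-m expansion, applying g_m shifts the digits left by one place, and additionally replaces each digit b by m−1−b when the leading digit is odd. -/

import Mathlib

/-- The multiple-tent map `g_m : [0,1] → [0,1]`, `g_m(x) = mx − 2j` on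
`[2j/m,(2j+1)/m]` and `g_m(x) = −mx + 2j` on `[(2j−1)/m, 2j/m]`; equivalently
`g_m(x) = 1 − |((mx) mod 2) − 1|`. -/
noncomputable def tentMap (m : ℕ) (x : ℝ) : ℝ :=
  1 - |2 * Int.fract ((m : ℝ) * x / 2) - 1|

lemma summable_digits (m : ℕ) (hm : 2 ≤ m) (b : ℕ → ℕ) (hb : ∀ i, b i ≤ m) :
    Summable (fun i : ℕ => (b i : ℝ) / (m : ℝ) ^ (i + 1)) := by
  have hM : (1:ℝ) < m := by exact_mod_cast lt_of_lt_of_le one_lt_two hm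
  have hM0 : (0:ℝ) < m := by linarith
  have h1 : (1:ℝ)/m < 1 := by rw [div_lt_one hM0]; linarith
  have h0 : (0:ℝ) ≤ 1/m := by positivity
  apply Summable.of_nonneg_of_le (fun i => by positivity) (fun i => ?_)
    (summable_geometric_of_lt_one h0 h1)
  rw [div_pow, one_pow, div_le_div_iff₀ (by positivity) (by positivity), pow_succ]
  have : (b i : ℝ) ≤ m := by exact_mod_cast hb i
  nlinarith [pow_pos hM0 i]

lemma geom_helper (m : ℕ) (hm : 2 ≤ m) :
    ∑' i : ℕ, ((m : ℝ) - 1) / (m : ℝ) ^ (i + 1) = 1 := by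
  have hM : (1:ℝ) < m := by exact_mod_cast lt_of_lt_of_le one_lt_two hm
  have hM0 : (0:ℝ) < m := by linarith
  have h1 : (1:ℝ)/m < 1 := by rw [div_lt_one hM0]; linarith
  have h0 : (0:ℝ) ≤ 1/m := by positivity
  have heq : (fun i : ℕ => ((m : ℝ) - 1) / (m : ℝ) ^ (i + 1))
      = fun i : ℕ => (((m:ℝ)-1)/m) * (1/m)^i := by
    funext i
    rw [div_pow, one_pow, div_mul_div_comm, mul_one, ← pow_succ']
  rw [heq, tsum_mul_left, tsum_geometric_of_lt_one h0 h1]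
  have hne : (m:ℝ) - 1 ≠ 0 := by linarith
  field_simp

/-- In base-`m` expansion `x = Σ a(i)/m^{i+1}` with digits
`a(i) < m`, applying the multiple-tent map `g_m` shifts the digits left by one
place, and additionally replaces each digit `b` by `m−1−b` when the leading digit
`a(0)` is odd. -/
theorem tentMap_digit_shift (m : ℕ) (hm : 2 ≤ m) (a : ℕ → ℕ) (ha : ∀ i, a i < m) :
    (Even (a 0) →
      tentMap m (∑' i : ℕ, (a i : ℝ) / (m : ℝ) ^ (i + 1))
        = ∑' i : ℕ, (a (i + 1) : ℝ) / (m : ℝ) ^ (i + 1)) ∧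
    (Odd (a 0) →
      tentMap m (∑' i : ℕ, (a i : ℝ) / (m : ℝ) ^ (i + 1))
        = ∑' i : ℕ, ((m - 1 - a (i + 1) : ℕ) : ℝ) / (m : ℝ) ^ (i + 1)) := by
  have hM : (1:ℝ) < m := by exact_mod_cast lt_of_lt_of_le one_lt_two hm
  have hM0 : (0:ℝ) < m := by linarith
  set x := ∑' i : ℕ, (a i : ℝ) / (m : ℝ) ^ (i + 1) with hxdef
  set y := ∑' i : ℕ, (a (i + 1) : ℝ) / (m : ℝ) ^ (i + 1) with hydef
  have hsum : Summable (fun i : ℕ => (a i : ℝ) / (m : ℝ) ^ (i + 1)) :=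
    summable_digits m hm a (fun i => (ha i).le)
  have hsum' : Summable (fun i : ℕ => (a (i+1) : ℝ) / (m : ℝ) ^ (i + 1)) :=
    summable_digits m hm (fun i => a (i+1)) (fun i => (ha (i+1)).le)
  have hsumc : Summable (fun i : ℕ => ((m:ℝ) - 1) / (m : ℝ) ^ (i + 1)) := by
    have := summable_digits m hm (fun _ => m - 1) (fun i => (Nat.sub_le m 1))
    have hc : ((m - 1 : ℕ) : ℝ) = (m:ℝ) - 1 := by
      rw [Nat.cast_sub (le_trans one_le_two hm)]; norm_num
    simpa [hc] using this
  -- y ∈ [0,1]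
  have hy0 : 0 ≤ y := tsum_nonneg (fun i => by positivity)
  have hy1 : y ≤ 1 := by
    rw [hydef, ← geom_helper m hm]
    apply Summable.tsum_le_tsum _ hsum' hsumc
    intro i
    apply div_le_div_of_nonneg_right _ (by positivity)
    have : (a (i+1) : ℝ) + 1 ≤ m := by exact_mod_cast ha (i+1)
    linarith
  -- m * x = a 0 + y
  have hmx : (m:ℝ) * x = (a 0 : ℝ) + y := by
    rw [hxdef, ← tsum_mul_left]
    have heq : (fun i : ℕ => (m:ℝ) * ((a i : ℝ) / (m : ℝ) ^ (i + 1)))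
        = fun i : ℕ => (a i : ℝ) / (m : ℝ) ^ i := by
      funext i
      rw [pow_succ]
      field_simp
    rw [heq]
    have hs : Summable (fun i : ℕ => (a i : ℝ) / (m : ℝ) ^ i) := by
      simpa [heq] using hsum.mul_left (m:ℝ)
    rw [Summable.tsum_eq_zero_add hs]
    simp
    exact hydef.symm
  -- key fract computation
  constructor
  · rintro ⟨k, hk⟩
    have hfr : Int.fract ((m:ℝ) * x / 2) = y / 2 := by
      rw [hmx, hk]
      push_cast
      have : ((k:ℝ) + k + y) / 2 = (k:ℤ) + y / 2 := by push_cast; ring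
      rw [this, Int.fract_intCast_add, Int.fract_eq_self.mpr ⟨by linarith, by linarith⟩]
    rw [tentMap, hfr]
    rw [abs_of_nonpos (by linarith)]
    ring
  · rintro ⟨k, hk⟩
    have hfr : Int.fract ((m:ℝ) * x / 2) = (1 + y) / 2 - if y = 1 then 1 else 0 := by
      rw [hmx, hk]
      push_cast
      have : ((2*k:ℝ) + 1 + y) / 2 = (k:ℤ) + (1 + y) / 2 := by push_cast; ring
      rw [this, Int.fract_intCast_add]
      rcases eq_or_lt_of_le hy1 with h1 | h1
      · rw [if_pos h1, h1]
        norm_num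
      · rw [if_neg (by linarith), Int.fract_eq_self.mpr ⟨by linarith, by linarith⟩]
        ring
    have hrhs : ∑' i : ℕ, ((m - 1 - a (i + 1) : ℕ) : ℝ) / (m : ℝ) ^ (i + 1) = 1 - y := by
      have hcast : ∀ i : ℕ, ((m - 1 - a (i + 1) : ℕ) : ℝ) = ((m:ℝ) - 1) - (a (i+1) : ℝ) := by
        intro i
        have h1 : a (i+1) ≤ m - 1 := Nat.le_sub_one_of_lt (ha (i+1))
        rw [Nat.cast_sub h1, Nat.cast_sub (le_trans one_le_two hm)]
        norm_num
      have : (fun i : ℕ => ((m - 1 - a (i + 1) : ℕ) : ℝ) / (m : ℝ) ^ (i + 1))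
          = fun i : ℕ => ((m:ℝ) - 1) / (m : ℝ) ^ (i + 1) - (a (i+1) : ℝ) / (m : ℝ) ^ (i + 1) := by
        funext i; rw [hcast i]; ring
      rw [this, Summable.tsum_sub hsumc hsum', geom_helper m hm, ← hydef]
    rw [hrhs, tentMap, hfr]
    rcases eq_or_lt_of_le hy1 with h1 | h1
    · rw [if_pos h1, h1]
      norm_num
    · rw [if_neg (by linarith)]
      rw [abs_of_nonneg (by linarith)]
      ring
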